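/- For every positive integer n, ∫_0^1 log Γ(x) cos(2nπx) dx = 1/(4n). -/

import Mathlib

open Real MeasureTheory intervalIntegral Set Filter

lemma log_intble : IntervalIntegrable Real.log volume 0 1 := by
  rw [intervalIntegrable_iff_integrableOn_Ioc_of_le zero_le_one]
  have hg : IntegrableOn (fun x : ℝ => 2 * x ^ (-(1:ℝ)/2)) (Set.Ioc 0 1) volume := by
    have := (intervalIntegrable_rpow' (a := 0) (b := 1)
      (by norm_num : (-1:ℝ) < -(1:ℝ)/2)).const_mul 2
    rwa [intervalIntegrable_iff_integrableOn_Ioc_of_le zero_le_one] at this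
  refine hg.integrable.mono Real.measurable_log.aestronglyMeasurable ?_
  filter_upwards [MeasureTheory.ae_restrict_mem measurableSet_Ioc] with x hx
  obtain ⟨hx0, hx1⟩ := hx
  have hrp : (0:ℝ) < x ^ (-(1:ℝ)/2) := Real.rpow_pos_of_pos hx0 _
  have hlog : Real.log x ≤ 0 := Real.log_nonpos hx0.le hx1
  rw [Real.norm_eq_abs, Real.norm_eq_abs, abs_of_nonpos hlog, abs_of_pos (by positivity)]
  -- -log x ≤ 2 * x^(-1/2)
  have h1 : Real.log (x ^ (-(1:ℝ)/2)) ≤ x ^ (-(1:ℝ)/2) - 1 := Real.log_le_sub_one_of_pos hrp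
  rw [Real.log_rpow hx0] at h1
  nlinarith [hrp]

lemma continuousAt_logGamma {x : ℝ} (hx : 0 < x) :
    ContinuousAt (fun y => Real.log (Real.Gamma y)) x := by
  refine (Real.differentiableAt_Gamma fun m => ?_).continuousAt.log
    (Real.Gamma_pos_of_pos hx).ne'
  have : (0:ℝ) ≤ m := Nat.cast_nonneg m
  intro h; rw [h] at hx; linarith

lemma logGamma_intble : IntervalIntegrable (fun x => Real.log (Real.Gamma x)) volume 0 1 := by
  have h1 : IntervalIntegrable (fun x => Real.log (Real.Gamma (x+1)) - Real.log x)
      volume 0 1 := by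
    refine IntervalIntegrable.sub ?_ log_intble
    refine (ContinuousOn.intervalIntegrable ?_)
    intro x hx
    rw [Set.uIcc_of_le (by norm_num : (0:ℝ) ≤ 1)] at hx
    have h2 : ContinuousAt ((fun y => Real.log (Real.Gamma y)) ∘ (fun y : ℝ => y + 1)) x :=
      ContinuousAt.comp (continuousAt_logGamma (by linarith [hx.1] : (0:ℝ) < x + 1))
        (by fun_prop)
    exact h2.continuousWithinAt
  rw [intervalIntegrable_iff_integrableOn_Ioc_of_le zero_le_one] at h1 ⊢
  refine h1.congr_fun (fun x hx => ?_) measurableSet_Ioc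
  have hx0 : 0 < x := hx.1
  dsimp only
  rw [Real.Gamma_add_one hx0.ne', Real.log_mul hx0.ne' (Real.Gamma_pos_of_pos hx0).ne']
  ring

lemma trig_id (m : ℕ) (θ : ℝ) :
    Real.cos θ * Real.sin (2*(m+1)*θ) =
      Real.sin θ * (1 + Real.cos (2*(m+1)*θ))
        + 2 * Real.sin θ * ∑ k ∈ Finset.range m, Real.cos (2*(k+1)*θ) := by
  induction m with
  | zero =>
      simp only [Nat.cast_zero, zero_add, mul_one, Finset.range_zero, Finset.sum_empty, mul_zero,
        add_zero]
      rw [Real.sin_two_mul, Real.cos_two_mul]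
      ring
  | succ m ih =>
      have e1 : 2*((m:ℝ)+1+1)*θ = 2*((m:ℝ)+1)*θ + 2*θ := by ring
      push_cast
      rw [e1, Real.sin_add, Real.cos_add, Real.sin_two_mul, Real.cos_two_mul,
        Finset.sum_range_succ]
      push_cast at ih
      linear_combination ih + 2 * Real.cos θ * Real.sin (2*((m:ℝ)+1)*θ) * (Real.sin_sq_add_cos_sq θ)

lemma integral_cos_mul {a : ℝ} (ha : a ≠ 0) (p q : ℝ) :
    ∫ x in p..q, Real.cos (a*x) = (Real.sin (a*q) - Real.sin (a*p))/a := by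
  have hd : ∀ x ∈ Set.uIcc p q, HasDerivAt (fun y => Real.sin (a*y)/a) (Real.cos (a*x)) x := by
    intro x _
    have h1 : HasDerivAt (fun y : ℝ => a*y) a x := by
      simpa using (hasDerivAt_id x).const_mul a
    have := (h1.sin).div_const a
    simpa [mul_comm, mul_div_assoc, mul_div_cancel_left₀ _ ha] using this
  rw [intervalIntegral.integral_eq_sub_of_hasDerivAt hd
    ((Real.continuous_cos.comp (continuous_const.mul continuous_id)).intervalIntegrable p q)]
  ring

lemma cos_int_zero_one (k : ℕ) (hk : 0 < k) :
    (∫ x in (0:ℝ)..1, Real.cos (2*(k:ℝ)*Real.pi*x)) = 0 := by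
  have ha : 2*(k:ℝ)*Real.pi ≠ 0 := by
    have := Real.pi_ne_zero
    positivity
  rw [integral_cos_mul ha 0 1]
  have h2 : Real.sin (2*(k:ℝ)*Real.pi*1) = 0 := by
    have := Real.sin_nat_mul_pi (2*k)
    push_cast at this
    convert this using 2
    ring
  rw [h2]
  simp

lemma cos_int_zero_half (k : ℕ) (hk : 0 < k) :
    (∫ x in (0:ℝ)..(1/2:ℝ), Real.cos (2*(k:ℝ)*Real.pi*x)) = 0 := by
  have ha : 2*(k:ℝ)*Real.pi ≠ 0 := by
    have := Real.pi_ne_zero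
    positivity
  rw [integral_cos_mul ha 0 (1/2)]
  have h2 : Real.sin (2*(k:ℝ)*Real.pi*(1/2)) = 0 := by
    have := Real.sin_nat_mul_pi k
    convert this using 2
    ring
  rw [h2]
  simp

open scoped Topology in
lemma F_cont (m : ℕ) :
    ContinuousOn
      (fun x => Real.log (Real.sin (Real.pi*x)) * Real.sin (2*((m:ℝ)+1)*Real.pi*x) / (2*((m:ℝ)+1)*Real.pi))
      (Set.Icc 0 (1/2)) := by
  have hpi := Real.pi_pos
  have hc : (0:ℝ) < 2*((m:ℝ)+1)*Real.pi := by positivity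
  intro x hx
  rcases eq_or_ne x 0 with rfl | hx0
  · -- continuity within at 0
    have hF0 : Real.log (Real.sin (Real.pi*0)) * Real.sin (2*((m:ℝ)+1)*Real.pi*0) / (2*((m:ℝ)+1)*Real.pi)
        = 0 := by simp
    rw [ContinuousWithinAt, hF0]
    have hsub : Set.Icc (0:ℝ) (1/2) ⊆ insert 0 (Set.Ioc 0 (1/2)) := by
      intro y hy
      rcases eq_or_ne y 0 with rfl | hy0
      · exact Set.mem_insert _ _
      · exact Set.mem_insert_of_mem _ ⟨lt_of_le_of_ne hy.1 (Ne.symm hy0), hy.2⟩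
    refine Filter.Tendsto.mono_left ?_ (nhdsWithin_mono 0 hsub)
    rw [nhdsWithin_insert, Filter.tendsto_sup]
    constructor
    · simpa [hF0] using tendsto_pure_nhds
        (fun x => Real.log (Real.sin (Real.pi*x)) * Real.sin (2*((m:ℝ)+1)*Real.pi*x)
          / (2*((m:ℝ)+1)*Real.pi)) 0
    · refine squeeze_zero_norm' ?_ ?_ (a := fun y => -Real.log (2*y) * y)
      · filter_upwards [self_mem_nhdsWithin] with y hy
        obtain ⟨hy0, hy2⟩ := hy
        have hsin2 : 2*y ≤ Real.sin (Real.pi*y) := by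
          have h := Real.mul_le_sin (x := Real.pi*y) (by positivity)
            (by nlinarith)
          calc 2*y = 2/Real.pi * (Real.pi*y) := by field_simp
          _ = 2/Real.pi * (Real.pi*y) := by ring
          _ ≤ _ := h
        have hsin0 : 0 < Real.sin (Real.pi*y) := by linarith
        have hsin1 : Real.sin (Real.pi*y) ≤ 1 := Real.sin_le_one _
        have hlog1 : Real.log (2*y) ≤ Real.log (Real.sin (Real.pi*y)) :=
          Real.log_le_log (by positivity) hsin2
        have hlog2 : Real.log (Real.sin (Real.pi*y)) ≤ 0 := Real.log_nonpos hsin0.le hsin1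
        have hlog3 : Real.log (2*y) ≤ 0 := by linarith
        have habs1 : |Real.log (Real.sin (Real.pi*y))| ≤ -Real.log (2*y) := by
          rw [abs_of_nonpos hlog2]; linarith
        have habs2 : |Real.sin (2*((m:ℝ)+1)*Real.pi*y)| ≤ 2*((m:ℝ)+1)*Real.pi*y := by
          calc |Real.sin (2*((m:ℝ)+1)*Real.pi*y)| ≤ |2*((m:ℝ)+1)*Real.pi*y| := Real.abs_sin_le_abs
          _ = 2*((m:ℝ)+1)*Real.pi*y := abs_of_nonneg (by positivity)
        rw [Real.norm_eq_abs, abs_div, abs_of_pos hc, abs_mul, div_le_iff₀ hc]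
        calc |Real.log (Real.sin (Real.pi*y))| * |Real.sin (2*((m:ℝ)+1)*Real.pi*y)|
            ≤ (-Real.log (2*y)) * (2*((m:ℝ)+1)*Real.pi*y) := by
              apply mul_le_mul habs1 habs2 (abs_nonneg _) (by linarith)
          _ = -Real.log (2*y) * y * (2*((m:ℝ)+1)*Real.pi) := by ring
      · have h1 : Filter.Tendsto (fun x:ℝ => Real.log x * x) (𝓝[>] 0) (𝓝 0) := by
          simpa only [Real.rpow_one] using tendsto_log_mul_rpow_nhdsGT_zero zero_lt_one
        have h2 : Filter.Tendsto (fun x:ℝ => Real.log 2 * x) (𝓝[>] (0:ℝ)) (𝓝 0) := by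
          have hco : Continuous (fun x:ℝ => Real.log 2 * x) := by fun_prop
          have : Filter.Tendsto (fun x:ℝ => Real.log 2 * x) (𝓝 (0:ℝ)) (𝓝 0) := by
            simpa using hco.tendsto 0
          exact this.mono_left nhdsWithin_le_nhds
        have h3 : Filter.Tendsto (fun y:ℝ => -(Real.log 2 * y + Real.log y * y)) (𝓝[>] (0:ℝ))
            (𝓝 0) := by
          have := (h2.add h1).neg
          simpa using this
        refine Filter.Tendsto.congr' ?_ (h3.mono_left (nhdsWithin_mono 0 Set.Ioc_subset_Ioi_self))
        filter_upwards [self_mem_nhdsWithin] with y hy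
        have hy0 : (0:ℝ) < y := hy.1
        rw [Real.log_mul (by norm_num) hy0.ne']
        ring
  · -- continuity at interior/right points
    have hx1 : 0 < x := lt_of_le_of_ne hx.1 (Ne.symm hx0)
    have hsin : 0 < Real.sin (Real.pi*x) :=
      Real.sin_pos_of_pos_of_lt_pi (by positivity) (by nlinarith [hx.2])
    refine ContinuousAt.continuousWithinAt ?_
    have : ContinuousAt (fun y => Real.log (Real.sin (Real.pi*y))) x := by
      have hcont : ContinuousAt (fun y : ℝ => Real.sin (Real.pi*y)) x := by fun_prop
      exact hcont.log hsin.ne'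
    fun_prop (disch := exact hsin.ne')

lemma F_deriv (m : ℕ) {x : ℝ} (hx : x ∈ Set.Ioo (0:ℝ) 1) :
    HasDerivAt
      (fun y => Real.log (Real.sin (Real.pi*y)) * Real.sin (2*((m:ℝ)+1)*Real.pi*y)
        / (2*((m:ℝ)+1)*Real.pi))
      (Real.log (Real.sin (Real.pi*x)) * Real.cos (2*((m:ℝ)+1)*Real.pi*x)
        + (1 + Real.cos (2*((m:ℝ)+1)*Real.pi*x)
            + 2*∑ k ∈ Finset.range m, Real.cos (2*((k:ℝ)+1)*Real.pi*x)) / (2*((m:ℝ)+1))) x := by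
  have hpi := Real.pi_pos
  have hsin : 0 < Real.sin (Real.pi*x) :=
    Real.sin_pos_of_pos_of_lt_pi (by nlinarith [hx.1]) (by nlinarith [hx.2])
  have h1 : HasDerivAt (fun y : ℝ => Real.pi*y) Real.pi x := by
    simpa using (hasDerivAt_id x).const_mul Real.pi
  have h2 : HasDerivAt (fun y : ℝ => Real.sin (Real.pi*y)) (Real.cos (Real.pi*x) * Real.pi) x :=
    h1.sin
  have h3 := h2.log hsin.ne'
  have h4 : HasDerivAt (fun y : ℝ => 2*((m:ℝ)+1)*Real.pi*y) (2*((m:ℝ)+1)*Real.pi) x := by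
    simpa using (hasDerivAt_id x).const_mul (2*((m:ℝ)+1)*Real.pi)
  have h5 := (show HasDerivAt (fun y => Real.log (Real.sin (Real.pi*y)) * Real.sin (2*((m:ℝ)+1)*Real.pi*y)) _ x from h3.mul h4.sin).div_const (2*((m:ℝ)+1)*Real.pi)
  refine h5.congr_deriv (Eq.symm ?_)
  have hti := trig_id m (Real.pi*x)
  have harg : 2*((m:ℝ)+1)*(Real.pi*x) = 2*((m:ℝ)+1)*Real.pi*x := by ring
  rw [harg] at hti
  simp only [show ∀ k:ℕ, 2*((k:ℝ)+1)*(Real.pi*x) = 2*((k:ℝ)+1)*Real.pi*x from fun k => by ring]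
    at hti
  have hm : ((m:ℝ)+1) > 0 := by positivity
  field_simp
  linear_combination (norm := ring_nf) (-1 : ℝ) * hti

lemma logsin_int_half (m : ℕ)
    (hGint : IntervalIntegrable
      (fun x => Real.log (Real.sin (Real.pi*x)) * Real.cos (2*((m:ℝ)+1)*Real.pi*x))
      volume 0 (1/2)) :
    ∫ x in (0:ℝ)..(1/2), Real.log (Real.sin (Real.pi*x)) * Real.cos (2*((m:ℝ)+1)*Real.pi*x)
      = -(1/(4*((m:ℝ)+1))) := by
  have hpi := Real.pi_pos
  set H : ℝ → ℝ := fun x => (1 + Real.cos (2*((m:ℝ)+1)*Real.pi*x)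
    + 2*∑ k ∈ Finset.range m, Real.cos (2*((k:ℝ)+1)*Real.pi*x)) / (2*((m:ℝ)+1)) with hH
  have hHcont : Continuous H := by
    apply Continuous.div_const
    apply Continuous.add
    · fun_prop
    · exact continuous_const.mul (continuous_finset_sum _ (fun k _ => by fun_prop))
  have hint : IntervalIntegrable
      (fun x => Real.log (Real.sin (Real.pi*x)) * Real.cos (2*((m:ℝ)+1)*Real.pi*x) + H x)
      volume 0 (1/2) := hGint.add (hHcont.intervalIntegrable _ _)
  have hFTC := intervalIntegral.integral_eq_sub_of_hasDerivAt_of_le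
    (by norm_num : (0:ℝ) ≤ 1/2) (F_cont m)
    (fun x hx => F_deriv m ⟨hx.1, by linarith [hx.2, Set.mem_Ioo.mp hx]⟩) hint
  have hF12 : Real.sin (2*((m:ℝ)+1)*Real.pi*(1/2)) = 0 := by
    have := Real.sin_nat_mul_pi (m+1)
    push_cast at this
    convert this using 2
    ring
  rw [hF12] at hFTC
  simp only [Real.sin_zero, mul_zero, zero_mul, mul_zero, zero_div, Real.log_zero] at hFTC
  -- hFTC : ∫ (G + H) = 0 - 0
  have hHint2 : IntervalIntegrable H volume 0 (1/2) := hHcont.intervalIntegrable _ _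
  rw [intervalIntegral.integral_add hGint hHint2] at hFTC
  have hHval : ∫ x in (0:ℝ)..(1/2), H x = 1/(4*((m:ℝ)+1)) := by
    rw [hH]
    simp only
    rw [intervalIntegral.integral_div]
    have e1 : IntervalIntegrable (fun x : ℝ => 1 + Real.cos (2*((m:ℝ)+1)*Real.pi*x))
        volume 0 (1/2) := by apply Continuous.intervalIntegrable; fun_prop
    have e2 : IntervalIntegrable
        (fun x : ℝ => 2*∑ k ∈ Finset.range m, Real.cos (2*((k:ℝ)+1)*Real.pi*x))
        volume 0 (1/2) := by
      apply Continuous.intervalIntegrable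
      exact continuous_const.mul (continuous_finset_sum _ (fun k _ => by fun_prop))
    rw [intervalIntegral.integral_add e1 e2,
      intervalIntegral.integral_add
        (((by fun_prop : Continuous (fun _ : ℝ => (1:ℝ))).intervalIntegrable 0 (1/2)))
        (((by fun_prop : Continuous (fun x : ℝ => Real.cos (2*((m:ℝ)+1)*Real.pi*x))).intervalIntegrable 0 (1/2)))]
    have v1 : ∫ _ in (0:ℝ)..(1/2), (1:ℝ) = 1/2 := by simp
    have v2 : ∫ x in (0:ℝ)..(1/2), Real.cos (2*((m:ℝ)+1)*Real.pi*x) = 0 := by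
      have := cos_int_zero_half (m+1) (Nat.succ_pos m)
      push_cast at this
      exact this
    have v3 : ∫ x in (0:ℝ)..(1/2), (2*∑ k ∈ Finset.range m, Real.cos (2*((k:ℝ)+1)*Real.pi*x)) = 0 := by
      rw [intervalIntegral.integral_const_mul]
      rw [intervalIntegral.integral_finset_sum
        (f := fun (k:ℕ) (x:ℝ) => Real.cos (2*((k:ℝ)+1)*Real.pi*x))
        (fun k _ => ((by fun_prop : Continuous (fun x : ℝ => Real.cos (2*((k:ℝ)+1)*Real.pi*x))).intervalIntegrable 0 (1/2)))]
      have : ∀ k ∈ Finset.range m, (∫ x in (0:ℝ)..(1/2), Real.cos (2*((k:ℝ)+1)*Real.pi*x)) = 0 := by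
        intro k _
        have := cos_int_zero_half (k+1) (Nat.succ_pos k)
        push_cast at this
        exact this
      rw [Finset.sum_congr rfl this]
      simp
    rw [v1, v2, v3]
    have hm2 : ((m:ℝ)*2+2) ≠ 0 := by positivity
    field_simp
    ring
  rw [hHval] at hFTC
  linarith [hFTC]

lemma sin_nat_two_pi (k : ℕ) : Real.sin ((k:ℝ)*(2*Real.pi)) = 0 := by
  have := Real.sin_nat_mul_pi (2*k)
  push_cast at this
  convert this using 2
  ring

theorem stmt_15 (n : ℕ) (hn : 0 < n) :
    ∫ x in (0:ℝ)..1, Real.log (Real.Gamma x) * Real.cos (2 * (n : ℝ) * Real.pi * x) =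
      1 / (4 * (n : ℝ)) := by
  obtain ⟨m, rfl⟩ : ∃ m, n = m + 1 := ⟨n - 1, (Nat.succ_pred_eq_of_pos hn).symm⟩
  have hpi := Real.pi_pos
  push_cast
  set f : ℝ → ℝ := fun x => Real.log (Real.Gamma x) * Real.cos (2*((m:ℝ)+1)*Real.pi*x) with hf
  set f2 : ℝ → ℝ := fun x => Real.log (Real.Gamma (1-x)) * Real.cos (2*((m:ℝ)+1)*Real.pi*x)
    with hf2
  set G : ℝ → ℝ := fun x => Real.log (Real.sin (Real.pi*x)) * Real.cos (2*((m:ℝ)+1)*Real.pi*x)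
    with hG
  have hcosc : Continuous (fun x : ℝ => Real.cos (2*((m:ℝ)+1)*Real.pi*x)) := by fun_prop
  -- integrability of f
  have hf_int : IntervalIntegrable f volume 0 1 :=
    logGamma_intble.mul_continuousOn hcosc.continuousOn
  -- integrability of f2
  have hf2_int : IntervalIntegrable f2 volume 0 1 := by
    have h1 := (logGamma_intble.comp_sub_left 1).symm
    norm_num at h1
    exact h1.mul_continuousOn hcosc.continuousOn
  -- pointwise identity on Ioo 0 1
  have hkey : ∀ x ∈ Set.Ioo (0:ℝ) 1, G x =
      Real.log Real.pi * Real.cos (2*((m:ℝ)+1)*Real.pi*x) - f x - f2 x := by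
    intro x hx
    have hsin : 0 < Real.sin (Real.pi*x) :=
      Real.sin_pos_of_pos_of_lt_pi (by nlinarith [hx.1]) (by nlinarith [hx.2])
    have hg1 : 0 < Real.Gamma x := Real.Gamma_pos_of_pos hx.1
    have hg2 : 0 < Real.Gamma (1-x) := Real.Gamma_pos_of_pos (by linarith [hx.2])
    have hrefl := Real.Gamma_mul_Gamma_one_sub x
    have hlog : Real.log (Real.Gamma x) + Real.log (Real.Gamma (1-x))
        = Real.log Real.pi - Real.log (Real.sin (Real.pi*x)) := by
      rw [← Real.log_mul hg1.ne' hg2.ne', hrefl,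
        Real.log_div Real.pi_ne_zero hsin.ne']
    simp only [hG, hf, hf2]
    linear_combination Real.cos (2*((m:ℝ)+1)*Real.pi*x) * hlog
  -- integrability of G
  have hG_int : IntervalIntegrable G volume 0 1 := by
    have hφ : IntervalIntegrable
        (fun x => Real.log Real.pi * Real.cos (2*((m:ℝ)+1)*Real.pi*x) - f x - f2 x)
        volume 0 1 :=
      (((continuous_const.mul hcosc).intervalIntegrable 0 1).sub hf_int).sub hf2_int
    rw [intervalIntegrable_iff_integrableOn_Ioc_of_le zero_le_one,
      integrableOn_Ioc_iff_integrableOn_Ioo] at hφ ⊢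
    exact hφ.congr_fun (fun x hx => (hkey x hx).symm) measurableSet_Ioo
  -- value of ∫ G over 0..1
  have hGhalf : IntervalIntegrable G volume 0 (1/2) :=
    hG_int.mono_set (by rw [Set.uIcc_of_le (by norm_num : (0:ℝ) ≤ 1/2),
      Set.uIcc_of_le zero_le_one]; exact Set.Icc_subset_Icc le_rfl (by norm_num))
  have hGhalf2 : IntervalIntegrable G volume (1/2) 1 :=
    hG_int.mono_set (by rw [Set.uIcc_of_le (by norm_num : (1/2:ℝ) ≤ 1),
      Set.uIcc_of_le zero_le_one]; exact Set.Icc_subset_Icc (by norm_num) le_rfl)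
  have hGsymm : ∀ x : ℝ, G (1-x) = G x := by
    intro x
    simp only [hG]
    have e1 : Real.pi*(1-x) = Real.pi - Real.pi*x := by ring
    have e2 : 2*((m:ℝ)+1)*Real.pi*(1-x) = (m+1:ℕ)*(2*Real.pi) - 2*((m:ℝ)+1)*Real.pi*x := by
      push_cast; ring
    rw [e1, e2, Real.sin_pi_sub, Real.cos_sub, Real.cos_nat_mul_two_pi, sin_nat_two_pi]
    ring
  have hGval2 : ∫ x in (1/2:ℝ)..1, G x = ∫ x in (0:ℝ)..(1/2), G x := by
    have h2 : (∫ x in (0:ℝ)..(1/2), G (1-x)) = ∫ x in (1/2:ℝ)..1, G x := by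
      rw [intervalIntegral.integral_comp_sub_left G 1]
      norm_num
    rw [← h2]
    apply intervalIntegral.integral_congr
    intro x _
    exact (hGsymm x)
  have hGval : ∫ x in (0:ℝ)..1, G x = -(1/(2*((m:ℝ)+1))) := by
    rw [← intervalIntegral.integral_add_adjacent_intervals hGhalf hGhalf2, hGval2,
      logsin_int_half m hGhalf]
    have hm0 : ((m:ℝ)+1) ≠ 0 := by positivity
    field_simp
    ring
  -- reflection: ∫ f2 = ∫ f
  have hf2val : ∫ x in (0:ℝ)..1, f2 x = ∫ x in (0:ℝ)..1, f x := by
    have h1 : (∫ x in (0:ℝ)..1, f (1-x)) = ∫ x in (0:ℝ)..1, f x := by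
      rw [intervalIntegral.integral_comp_sub_left f 1]
      norm_num
    rw [← h1]
    apply intervalIntegral.integral_congr
    intro x _
    simp only [hf, hf2]
    have e2 : 2*((m:ℝ)+1)*Real.pi*(1-x) = (m+1:ℕ)*(2*Real.pi) - 2*((m:ℝ)+1)*Real.pi*x := by
      push_cast; ring
    rw [e2, Real.cos_sub, Real.cos_nat_mul_two_pi, sin_nat_two_pi]
    ring
  -- a.e. identity for the sum
  have hae : ∫ x in (0:ℝ)..1, (f x + f2 x) =
      ∫ x in (0:ℝ)..1, (Real.log Real.pi * Real.cos (2*((m:ℝ)+1)*Real.pi*x) - G x) := by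
    apply intervalIntegral.integral_congr_ae
    have h1 : {(1:ℝ)}ᶜ ∈ MeasureTheory.ae (volume : MeasureTheory.Measure ℝ) :=
      MeasureTheory.compl_mem_ae_iff.mpr (MeasureTheory.measure_singleton 1)
    filter_upwards [h1] with x hx hmem
    rw [Set.uIoc_of_le zero_le_one] at hmem
    have hx1 : x < 1 := lt_of_le_of_ne hmem.2 hx
    have := hkey x ⟨hmem.1, hx1⟩
    linarith [this]
  have hcosval : ∫ x in (0:ℝ)..1,
      Real.log Real.pi * Real.cos (2*((m:ℝ)+1)*Real.pi*x) = 0 := by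
    rw [intervalIntegral.integral_const_mul]
    have := cos_int_zero_one (m+1) (Nat.succ_pos m)
    push_cast at this
    rw [this, mul_zero]
  have hsum : (∫ x in (0:ℝ)..1, f x) + ∫ x in (0:ℝ)..1, f2 x = 1/(2*((m:ℝ)+1)) := by
    rw [← intervalIntegral.integral_add hf_int hf2_int, hae,
      intervalIntegral.integral_sub (f := fun x => Real.log Real.pi * Real.cos (2*((m:ℝ)+1)*Real.pi*x)) ((continuous_const.mul hcosc).intervalIntegrable 0 1)
        hG_int, hcosval, hGval]
    ring
  rw [hf2val] at hsum
  have hm0 : ((m:ℝ)+1) ≠ 0 := by positivity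
  have h4 : 1/(2*((m:ℝ)+1)) = 2*(1/(4*((m:ℝ)+1))) := by
    field_simp
    ring
  have hfin : ∫ x in (0:ℝ)..1, f x = 1/(4*((m:ℝ)+1)) := by linarith
  exact hfin
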